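/- arXiv:2510.11767 — 2 statements merged into one kernel-verified Lean document; each statement's English description precedes it below -/
import Mathlib

section
/- Hofstadter's G-sequence h, defined by h(0) = 0 and h(n) = n - h(h(n-1)) for n ≥ 1, satisfies h(n) = ⌊(n+1)/φ⌋ for all nonnegative integers n, where φ = (1+√5)/2. -/
noncomputable def phi : ℝ := (1 + Real.sqrt 5) / 2

noncomputable def alp : ℝ := (Real.sqrt 5 - 1) / 2

lemma sq5 : Real.sqrt 5 ^ 2 = 5 := Real.sq_sqrt (by norm_num)

lemma alp_pos : 0 < alp := by
  have h := sq5
  have h2 := Real.sqrt_nonneg 5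
  unfold alp; nlinarith

lemma alp_lt_one : alp < 1 := by
  have h := sq5
  have h2 := Real.sqrt_nonneg 5
  unfold alp; nlinarith

lemma alp_sq : alp ^ 2 = 1 - alp := by
  have h := sq5
  unfold alp; nlinarith

lemma alp_irr : Irrational alp := by
  have h : Irrational (Real.sqrt 5) := (by norm_num : Nat.Prime 5).irrational_sqrt
  have h2 : Irrational (Real.sqrt 5 - (1:ℤ)) := h.sub_intCast 1
  have h3 := h2.div_intCast (m := 2) (by norm_num)
  simpa [alp] using h3

lemma nat_alp_irr (n : ℕ) (hn : n ≠ 0) : Irrational ((n:ℝ) * alp) :=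
  alp_irr.natCast_mul hn

lemma phi_mul_alp : phi * alp = 1 := by
  have h := sq5
  unfold phi alp; nlinarith

lemma phi_ne : phi ≠ 0 := by
  have h := sq5
  have h2 := Real.sqrt_nonneg 5
  unfold phi; intro hc; nlinarith

lemma div_phi (x : ℝ) : x / phi = x * alp := by
  rw [div_eq_iff phi_ne, mul_assoc, mul_comm alp phi, phi_mul_alp, mul_one]

lemma key (n : ℕ) (hn : 1 ≤ n) :
    ⌊((⌊(n:ℝ) * alp⌋ : ℝ) + 1) * alp⌋ = n - ⌊((n:ℝ) + 1) * alp⌋ := by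
  set m : ℤ := ⌊(n:ℝ) * alp⌋ with hm
  have hml : (m:ℝ) ≤ (n:ℝ) * alp := Int.floor_le _
  have hmu : (n:ℝ) * alp < m + 1 := Int.lt_floor_add_one _
  have ha := alp_pos
  have hb := alp_lt_one
  have hsq := alp_sq
  have hirr : Irrational (((n:ℕ)+1 : ℕ) * alp) := nat_alp_irr (n+1) (by omega)
  have hne : ((n:ℝ) + 1) * alp ≠ (m:ℝ) + 1 := by
    intro hc
    apply hirr.ne_int (m+1)
    push_cast
    rw [hc]
  rcases lt_or_gt_of_ne hne with hlt | hgt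
  · -- k = m case
    have hk : ⌊((n:ℝ) + 1) * alp⌋ = m := by
      apply Int.floor_eq_iff.mpr
      constructor
      · push_cast; nlinarith
      · push_cast; linarith
    rw [hk]
    apply Int.floor_eq_iff.mpr
    constructor
    · push_cast; nlinarith
    · push_cast; nlinarith
  · -- k = m + 1 case
    have hk : ⌊((n:ℝ) + 1) * alp⌋ = m + 1 := by
      apply Int.floor_eq_iff.mpr
      constructor
      · push_cast; linarith
      · push_cast; nlinarith
    rw [hk]
    apply Int.floor_eq_iff.mpr
    constructor
    · push_cast; nlinarith
    · push_cast; nlinarith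

noncomputable def g (n : ℕ) : ℕ := (⌊((n:ℝ) + 1) * alp⌋).toNat

lemma g_cast (n : ℕ) : (g n : ℤ) = ⌊((n:ℝ) + 1) * alp⌋ := by
  have : (0:ℤ) ≤ ⌊((n:ℝ) + 1) * alp⌋ := by
    apply Int.floor_nonneg.mpr
    exact mul_nonneg (by positivity) alp_pos.le
  simp [g, Int.toNat_of_nonneg this]

lemma g_le (n : ℕ) : g n ≤ n := by
  have h1 : (g n : ℤ) ≤ n := by
    rw [g_cast]
    have hx : ((n:ℝ) + 1) * alp < (n:ℝ) + 1 := by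
      nlinarith [alp_lt_one, alp_pos, Nat.cast_nonneg (α := ℝ) n]
    have := Int.floor_lt.mpr (by push_cast; linarith : ((n:ℝ) + 1) * alp < ((n:ℤ) + 1 : ℤ))
    omega
  exact_mod_cast h1

lemma g0 : g 0 = 0 := by
  have : ⌊((0:ℝ) + 1) * alp⌋ = 0 := by
    rw [Int.floor_eq_zero_iff]
    constructor
    · simpa using alp_pos.le
    · simpa using alp_lt_one
  have h2 : ⌊alp⌋ = 0 := by rw [← this]; norm_num
  simp [g, h2]

lemma g_rec (n : ℕ) (hn : 1 ≤ n) : g (g (n - 1)) + g n = n := by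
  have hc : ((g (n - 1) : ℤ)) = ⌊(n:ℝ) * alp⌋ := by
    rw [g_cast]
    congr 1
    have : ((n - 1 : ℕ) : ℝ) + 1 = (n : ℝ) := by
      have : (1:ℕ) ≤ n := hn
      push_cast [this]
      ring
    rw [this]
  have h2 : (g (g (n - 1)) : ℤ) = (n : ℤ) - ⌊((n:ℝ) + 1) * alp⌋ := by
    rw [g_cast]
    rw [show ((g (n-1) : ℕ) : ℝ) = ((⌊(n:ℝ) * alp⌋ : ℤ) : ℝ) by exact_mod_cast congrArg (fun z : ℤ => (z : ℝ)) hc]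
    exact key n hn
  have h3 := g_cast n
  have h4 : (g (g (n-1)) : ℤ) + (g n : ℤ) = n := by omega
  exact_mod_cast h4

theorem stmt7 (h : ℕ → ℕ) (h0 : h 0 = 0)
    (hrec : ∀ n : ℕ, 1 ≤ n → h n = n - h (h (n - 1))) :
    ∀ n : ℕ, (h n : ℤ) = ⌊((n : ℝ) + 1) / phi⌋ := by
  have main : ∀ n, h n = g n := by
    intro n
    induction n using Nat.strong_induction_on with
    | _ n ih =>
      rcases Nat.eq_zero_or_pos n with rfl | hn
      · rw [h0, g0]
      · have e1 : h (n - 1) = g (n - 1) := ih (n - 1) (by omega)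
        have e2 : h (g (n - 1)) = g (g (n - 1)) := ih (g (n - 1)) (by
          have := g_le (n - 1); omega)
        have e3 := g_rec n hn
        rw [hrec n hn, e1, e2]
        omega
  intro n
  rw [main n, div_phi, g_cast]
end

section
/- Let φ = (1+√5)/2 and for each positive integer n define f(n) to be the unique nonnegative integer m such that ⌊nφ⌋ - 2 ≤ ⌊m(φ+1)⌋ ≤ ⌊nφ⌋ - 1. Then for n ≥ 2, f(n) > f(n-1) if and only if there exists a nonnegative integer m with ⌊nφ⌋ = ⌊m(φ+1)⌋ + 1. -/
lemma phi_eq : phi = Real.goldenRatio := rfl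

lemma one_lt_phi : 1 < phi := Real.one_lt_goldenRatio

lemma phi_lt_two : phi < 2 := by
  have h5 : Real.sqrt 5 < 3 := by
    rw [show (3:ℝ) = Real.sqrt 9 by rw [show (9:ℝ) = 3^2 by norm_num, Real.sqrt_sq]; norm_num]
    exact Real.sqrt_lt_sqrt (by norm_num) (by norm_num)
  unfold phi; linarith

lemma phi_sq : phi * phi = phi + 1 := by
  have := Real.goldenRatio_sq
  rw [← phi_eq, sq] at this
  exact this

lemma phi_conj : phi.HolderConjugate (phi + 1) where
  left_pos := by linarith [one_lt_phi]
  right_pos := by linarith [one_lt_phi]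
  inv_add_inv_eq_inv := by
    have h1 : (0:ℝ) < phi := by linarith [one_lt_phi]
    have h2 : (0:ℝ) < phi + 1 := by linarith
    field_simp
    nlinarith [phi_sq]

lemma phi_irrational : Irrational phi := Real.goldenRatio_irrational

/-- strict growth of b -/
lemma b_step {k l : ℤ} (h : k < l) (hk : 0 ≤ k) :
    ⌊(k : ℝ) * (phi + 1)⌋ + 2 ≤ ⌊(l : ℝ) * (phi + 1)⌋ := by
  have h2 : (k : ℝ) * (phi + 1) + 2 ≤ (l : ℝ) * (phi + 1) := by
    have : ((k : ℝ) + 1) * (phi + 1) ≤ (l : ℝ) * (phi + 1) := by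
      apply mul_le_mul_of_nonneg_right _ (by linarith [one_lt_phi])
      have : (k : ℝ) + 1 ≤ l := by exact_mod_cast h
      linarith
    nlinarith [one_lt_phi, phi_lt_two]
  calc ⌊(k : ℝ) * (phi + 1)⌋ + 2 = ⌊(k : ℝ) * (phi + 1) + (2:ℤ)⌋ := by
        rw [Int.floor_add_intCast]
    _ ≤ ⌊(l : ℝ) * (phi + 1)⌋ := Int.floor_mono (by push_cast; linarith)

/-- strict growth of a -/
lemma a_step {k l : ℤ} (h : k < l) (hk : 0 ≤ k) :
    ⌊(k : ℝ) * phi⌋ + 1 ≤ ⌊(l : ℝ) * phi⌋ := by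
  have h2 : (k : ℝ) * phi + 1 ≤ (l : ℝ) * phi := by
    have : ((k : ℝ) + 1) * phi ≤ (l : ℝ) * phi := by
      apply mul_le_mul_of_nonneg_right _ (by linarith [one_lt_phi])
      have : (k : ℝ) + 1 ≤ l := by exact_mod_cast h
      linarith
    nlinarith [one_lt_phi]
  calc ⌊(k : ℝ) * phi⌋ + 1 = ⌊(k : ℝ) * phi + (1:ℤ)⌋ := by rw [Int.floor_add_intCast]
    _ ≤ ⌊(l : ℝ) * phi⌋ := Int.floor_mono (by push_cast; linarith)

lemma a_gap {k : ℤ} : ⌊((k : ℝ) + 1) * phi⌋ ≤ ⌊(k : ℝ) * phi⌋ + 2 := by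
  calc ⌊((k : ℝ) + 1) * phi⌋ ≤ ⌊(k : ℝ) * phi + (2:ℤ)⌋ :=
        Int.floor_mono (by push_cast; nlinarith [phi_lt_two])
    _ = ⌊(k : ℝ) * phi⌋ + 2 := Int.floor_add_intCast _ _

/-- Beatty: every positive integer is in one of the ranges -/
lemma beatty_total (j : ℤ) (hj : 0 < j) :
    (∃ k : ℤ, 0 < k ∧ ⌊(k : ℝ) * phi⌋ = j) ∨
    (∃ m : ℤ, 0 < m ∧ ⌊(m : ℝ) * (phi + 1)⌋ = j) := by
  have hpart := Irrational.beattySeq_symmDiff_beattySeq_pos phi_conj phi_irrational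
  have hjmem : j ∈ symmDiff {x | ∃ k > 0, beattySeq phi k = x}
      {x | ∃ k > 0, beattySeq (phi + 1) k = x} := by
    rw [hpart]; exact hj
  rw [Set.mem_symmDiff] at hjmem
  rcases hjmem with ⟨⟨k, hk, hkj⟩, -⟩ | ⟨⟨m, hm, hmj⟩, -⟩
  · exact Or.inl ⟨k, hk, by simpa [beattySeq] using hkj⟩
  · exact Or.inr ⟨m, hm, by simpa [beattySeq] using hmj⟩

theorem stmt8 (f : ℕ → ℕ)
    (hf : ∀ n : ℕ, 1 ≤ n →
      ⌊(n : ℝ) * phi⌋ - 2 ≤ ⌊((f n : ℕ) : ℝ) * (phi + 1)⌋ ∧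
      ⌊((f n : ℕ) : ℝ) * (phi + 1)⌋ ≤ ⌊(n : ℝ) * phi⌋ - 1) :
    ∀ n : ℕ, 2 ≤ n →
      (f n > f (n - 1) ↔ ∃ m : ℕ, ⌊(n : ℝ) * phi⌋ = ⌊(m : ℝ) * (phi + 1)⌋ + 1) := by
  intro n hn
  obtain ⟨n', rfl⟩ : ∃ n', n = n' + 1 := ⟨n - 1, by omega⟩
  simp only [Nat.add_sub_cancel]
  set A : ℤ := ⌊((n' + 1 : ℕ) : ℝ) * phi⌋ with hA
  set A' : ℤ := ⌊((n' : ℕ) : ℝ) * phi⌋ with hA'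
  obtain ⟨h1l, h1r⟩ := hf (n' + 1) (by omega)
  obtain ⟨h2l, h2r⟩ := hf n' (by omega)
  -- A' < A ≤ A' + 2
  have hAA' : A' + 1 ≤ A := by
    have := a_step (k := (n' : ℤ)) (l := (n' + 1 : ℤ)) (by omega) (by positivity)
    rw [hA, hA']; push_cast at this ⊢; exact this
  have hAA'2 : A ≤ A' + 2 := by
    have := a_gap (k := (n' : ℤ))
    rw [hA, hA']
    convert this using 3 <;> push_cast <;> ring
  -- monotonicity transfer for b on ℕ
  have bmono : ∀ k l : ℕ, k < l →
      ⌊((k : ℕ) : ℝ) * (phi + 1)⌋ + 2 ≤ ⌊((l : ℕ) : ℝ) * (phi + 1)⌋ := by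
    intro k l hkl
    have := b_step (k := (k : ℤ)) (l := (l : ℤ)) (by exact_mod_cast hkl) (by positivity)
    convert this using 3 <;> push_cast <;> ring
  constructor
  · -- forward
    intro hgt
    by_contra hcon
    push_neg at hcon
    -- b (f (n'+1)) = A - 2
    have hb1 : ⌊((f (n' + 1) : ℕ) : ℝ) * (phi + 1)⌋ = A - 2 := by
      rcases lt_or_eq_of_le h1r with h | h
      · omega
      · exact absurd (by omega : A = ⌊((f (n'+1) : ℕ) : ℝ) * (phi + 1)⌋ + 1)
          (hcon (f (n' + 1)))
    have hbstep := bmono _ _ hgt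
    -- deduce A' = A - 2
    have hA'eq : A' = A - 2 := by omega
    -- j := A - 1 is positive
    have hApos : 3 ≤ A := by
      have h2 : ((2 : ℕ) : ℝ) * phi ≤ ((n' + 1 : ℕ) : ℝ) * phi := by
        apply mul_le_mul_of_nonneg_right _ (by linarith [one_lt_phi])
        exact_mod_cast (by omega : 2 ≤ n' + 1)
      have h3 : (3 : ℝ) ≤ ((2 : ℕ) : ℝ) * phi := by
        push_cast
        unfold phi
        nlinarith [Real.sq_sqrt (by norm_num : (0:ℝ) ≤ 5), Real.sqrt_nonneg 5]
      have : (3 : ℝ) ≤ ((n' + 1 : ℕ) : ℝ) * phi := le_trans h3 h2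
      calc (3 : ℤ) = ⌊(3 : ℝ)⌋ := by norm_num
        _ ≤ A := Int.floor_mono this
    rcases beatty_total (A - 1) (by omega) with ⟨k, hk, hkj⟩ | ⟨m, hm, hmj⟩
    · -- A' < ⌊kφ⌋ < A forces n' < k < n'+1
      have hup : k < ((n' : ℤ) + 1) := by
        by_contra hc
        push_neg at hc
        have h2 : A ≤ ⌊(k : ℝ) * phi⌋ := by
          rw [hA]
          apply Int.floor_mono
          apply mul_le_mul_of_nonneg_right _ (by linarith [one_lt_phi] : (0:ℝ) ≤ phi)
          have hcr : ((n' : ℝ) + 1) ≤ (k : ℝ) := by exact_mod_cast hc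
          push_cast
          linarith
        omega
      have hlow : ((n' : ℕ) : ℤ) < k := by
        by_contra hc
        push_neg at hc
        have h2 : ⌊(k : ℝ) * phi⌋ ≤ A' := by
          rw [hA']
          apply Int.floor_mono
          apply mul_le_mul_of_nonneg_right _ (by linarith [one_lt_phi] : (0:ℝ) ≤ phi)
          exact_mod_cast hc
        omega
      push_cast at hlow hup
      omega
    · -- A - 1 = b m contradicts hcon
      have : 0 ≤ m := le_of_lt hm
      exact hcon m.toNat (by
        rw [show ((m.toNat : ℕ) : ℝ) = (m : ℝ) by exact_mod_cast Int.toNat_of_nonneg this]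
        omega)
  · -- reverse
    rintro ⟨m, hm⟩
    -- b (f (n'+1)) = A - 1
    have hbfn : ⌊((f (n' + 1) : ℕ) : ℝ) * (phi + 1)⌋ = A - 1 := by
      rcases lt_or_eq_of_le h1r with h | h
      · -- b (f (n'+1)) = A - 2 = b m - 1, impossible
        exfalso
        have hbm : ⌊((m : ℕ) : ℝ) * (phi + 1)⌋ = A - 1 := by omega
        have hfm : f (n' + 1) ≠ m := by
          intro he; rw [he] at h h1l; omega
        rcases lt_or_gt_of_ne hfm with hlt | hgt
        · have := bmono _ _ hlt; omega
        · have := bmono _ _ hgt; omega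
      · omega
    have hb2 : ⌊((f n' : ℕ) : ℝ) * (phi + 1)⌋ < ⌊((f (n' + 1) : ℕ) : ℝ) * (phi + 1)⌋ := by
      omega
    by_contra hc
    push_neg at hc
    rcases lt_or_eq_of_le hc with h | h
    · have := bmono _ _ h; omega
    · rw [h] at hb2; omega
end
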